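/- Let R be a field, and let A ∈ M_n E^m have degree-zero component A₀ = diag(λ₁,…,λ_n) with pairwise distinct λ_i ∈ R, and degree-one component A₁ = (v_{ij}) with v_{ij} ∈ E^m_1. Let f(x) = ∏_{i=1}^n (x − λ_i), B = f(A), and let B₁, B₂ be the degree-one and degree-two components of B. Write B₂ = B₂⁺ + B₂⁻ where B₂⁺ is the diagonal part and B₂⁻ is the off-diagonal part of B₂. Then B₁ B₂⁺ = B₂⁺ B₁ and B₁ B₂⁻ = − B₂⁻ B₁. -/

import Mathlib

open Polynomial DirectSum

section AuxGraded

variable {A σ : Type*} [Semiring A] [SetLike σ A] [AddSubmonoidClass σ A]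

private lemma gchl_decompose_mul (𝒜 : ℕ → σ) [GradedRing 𝒜] (a b : A) (n : ℕ) :
    (DirectSum.decompose 𝒜 (a * b) n : A) =
      ∑ k ∈ Finset.range (n + 1),
        (DirectSum.decompose 𝒜 a k : A) * (DirectSum.decompose 𝒜 b (n - k) : A) := by
  classical
  induction a using DirectSum.Decomposition.inductionOn 𝒜 with
  | zero => simp
  | @homogeneous i x =>
    rw [DirectSum.coe_decompose_mul_of_left_mem 𝒜 n x.2]
    have : ∀ k, (DirectSum.decompose 𝒜 (x : A) k : A) = if i = k then (x : A) else 0 := by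
      intro k
      rw [DirectSum.decompose_coe, DirectSum.coe_of_apply]
      split <;> simp
    simp_rw [this, ite_mul, zero_mul, Finset.sum_ite_eq, Finset.mem_range, Nat.lt_succ_iff]
  | add a a' ha ha' =>
    have h1 : ∀ k, (DirectSum.decompose 𝒜 (a + a') k : A) =
        (DirectSum.decompose 𝒜 a k : A) + (DirectSum.decompose 𝒜 a' k : A) := by
      intro k; rw [DirectSum.decompose_add, DirectSum.add_apply]; rfl
    have h2 : ∀ k, (DirectSum.decompose 𝒜 (a * b + a' * b) k : A) =
        (DirectSum.decompose 𝒜 (a * b) k : A) + (DirectSum.decompose 𝒜 (a' * b) k : A) := by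
      intro k; rw [DirectSum.decompose_add, DirectSum.add_apply]; rfl
    rw [add_mul, h2, ha, ha']
    simp_rw [h1, add_mul, Finset.sum_add_distrib]

end AuxGraded

section AuxExterior

variable {R : Type*} [CommRing R] {M : Type*} [AddCommGroup M] [Module R M]

private lemma gchl_mem_one {x : ExteriorAlgebra R M} (hx : x ∈ ⋀[R]^1 M) :
    x ∈ LinearMap.range (ExteriorAlgebra.ι R : M →ₗ[R] ExteriorAlgebra R M) := by
  rw [show ⋀[R]^1 M = LinearMap.range (ExteriorAlgebra.ι R : M →ₗ[R] ExteriorAlgebra R M) from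
    pow_one _] at hx
  exact hx

private lemma gchl_sq_zero {x : ExteriorAlgebra R M} (hx : x ∈ ⋀[R]^1 M) : x * x = 0 := by
  obtain ⟨y, rfl⟩ := gchl_mem_one hx
  exact ExteriorAlgebra.ι_sq_zero y

private lemma gchl_anticomm {x y : ExteriorAlgebra R M} (hx : x ∈ ⋀[R]^1 M)
    (hy : y ∈ ⋀[R]^1 M) : y * x = -(x * y) := by
  have h := gchl_sq_zero (Submodule.add_mem _ hx hy)
  have hxx := gchl_sq_zero hx
  have hyy := gchl_sq_zero hy
  have hsum : x * y + y * x = 0 := by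
    have h2 : (x + y) * (x + y) = x * x + (x * y + y * x) + y * y := by noncomm_ring
    rw [h, hxx, hyy] at h2
    simpa using h2.symm
  exact eq_neg_of_add_eq_zero_right hsum

private lemma gchl_comm2 {x z : ExteriorAlgebra R M} (hx : x ∈ ⋀[R]^1 M)
    (hz : z ∈ ⋀[R]^2 M) : x * z = z * x := by
  rw [show ⋀[R]^2 M = LinearMap.range (ExteriorAlgebra.ι R : M →ₗ[R] ExteriorAlgebra R M) *
    LinearMap.range (ExteriorAlgebra.ι R : M →ₗ[R] ExteriorAlgebra R M) from sq _] at hz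
  refine Submodule.mul_induction_on hz (fun a ha b hb => ?_)
    (fun u w hu hw => by rw [mul_add, add_mul, hu, hw])
  have ha1 : a ∈ ⋀[R]^1 M := by
    rw [show ⋀[R]^1 M = LinearMap.range (ExteriorAlgebra.ι R : M →ₗ[R] ExteriorAlgebra R M) from
      pow_one _]
    exact ha
  have hb1 : b ∈ ⋀[R]^1 M := by
    rw [show ⋀[R]^1 M = LinearMap.range (ExteriorAlgebra.ι R : M →ₗ[R] ExteriorAlgebra R M) from
      pow_one _]
    exact hb
  have h1 : a * x = -(x * a) := gchl_anticomm hx ha1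
  have h2 : b * x = -(x * b) := gchl_anticomm hx hb1
  calc x * (a * b) = -((a * x) * b) := by rw [h1]; noncomm_ring
    _ = a * (b * x) := by rw [h2]; noncomm_ring
    _ = (a * b) * x := by noncomm_ring

private lemma gchl_key {x y z : ExteriorAlgebra R M} (hx : x ∈ ⋀[R]^1 M)
    (hy : y ∈ ⋀[R]^1 M) (hz : z ∈ ⋀[R]^1 M) :
    (x + y) * (x * z - z * y) = 0 := by
  have hxx := gchl_sq_zero hx
  have hyy := gchl_sq_zero hy
  have hzy : z * y = -(y * z) := gchl_anticomm hy hz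
  have hyx : y * x = -(x * y) := gchl_anticomm hx hy
  have h4 : y * (z * y) = 0 := by
    rw [hzy, mul_neg, ← mul_assoc, hyy, zero_mul, neg_zero]
  have expand : (x + y) * (x * z - z * y) =
      (x * x) * z - x * (z * y) + ((y * x) * z - y * (z * y)) := by noncomm_ring
  rw [expand, hxx, h4, hzy, hyx]
  noncomm_ring

end AuxExterior

set_option maxHeartbeats 2000000 in
open Polynomial in
/-- If `A₀ = diag(λ₁, …, λₙ)` has pairwise distinct diagonal entries, `A₁ = (vᵢⱼ)` with
`vᵢⱼ` of degree 1, `B = f(A)` where `f` is the characteristic polynomial of `A₀`, and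
`B₁`, `B₂` are the degree-one and degree-two components of `B`, with `B₂⁺` and `B₂⁻`
the diagonal and off-diagonal parts of `B₂`, then `B₁` commutes with `B₂⁺` and
anticommutes with `B₂⁻`. -/
theorem grassmann_cayley_hamilton_lemma_commutation
    (R : Type*) [Field R] (m n : ℕ)
    (A : Matrix (Fin n) (Fin n) (ExteriorAlgebra R (Fin m → R)))
    (lam : Fin n → R) (hlam : Function.Injective lam)
    (hA₀ : ∀ i j, (DirectSum.decompose (fun i : ℕ => ⋀[R]^i (Fin m → R)) (A i j) 0 :
        ExteriorAlgebra R (Fin m → R)) =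
      algebraMap R _ (Matrix.diagonal lam i j))
    (v : Matrix (Fin n) (Fin n) (ExteriorAlgebra R (Fin m → R)))
    (hv : ∀ i j, v i j ∈ ⋀[R]^1 (Fin m → R))
    (hA₁ : ∀ i j, (DirectSum.decompose (fun i : ℕ => ⋀[R]^i (Fin m → R)) (A i j) 1 :
        ExteriorAlgebra R (Fin m → R)) = v i j)
    (f : R[X]) (hf : f = ∏ i, (X - C (lam i)))
    (B : Matrix (Fin n) (Fin n) (ExteriorAlgebra R (Fin m → R)))
    (hB : B = Polynomial.aeval A f)
    (B₁ B₂ B₂p B₂m : Matrix (Fin n) (Fin n) (ExteriorAlgebra R (Fin m → R)))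
    (hB₁ : ∀ r s, B₁ r s =
      (DirectSum.decompose (fun i : ℕ => ⋀[R]^i (Fin m → R)) (B r s) 1 :
        ExteriorAlgebra R (Fin m → R)))
    (hB₂ : ∀ r s, B₂ r s =
      (DirectSum.decompose (fun i : ℕ => ⋀[R]^i (Fin m → R)) (B r s) 2 :
        ExteriorAlgebra R (Fin m → R)))
    (hB₂p : B₂p = Matrix.diagonal (fun i => B₂ i i))
    (hB₂m : B₂m = B₂ - B₂p) :
    B₁ * B₂p = B₂p * B₁ ∧ B₁ * B₂m = -(B₂m * B₁) := by
  classical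
  -- memberships
  have hmem1 : ∀ r s, B₁ r s ∈ ⋀[R]^1 (Fin m → R) := by
    intro r s; rw [hB₁ r s]; exact SetLike.coe_mem _
  have hmem2 : ∀ r s, B₂ r s ∈ ⋀[R]^2 (Fin m → R) := by
    intro r s; rw [hB₂ r s]; exact SetLike.coe_mem _
  -- the degree-0 component of `B` vanishes
  have halg0 : ∀ c : R, algebraMap R (ExteriorAlgebra R (Fin m → R)) c ∈
      ⋀[R]^0 (Fin m → R) := by
    intro c
    rw [show ⋀[R]^0 (Fin m → R) = (1 : Submodule R (ExteriorAlgebra R (Fin m → R))) from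
      pow_zero _]
    exact Submodule.algebraMap_mem c
  have hB0 : ∀ r s, (DirectSum.decompose (fun i : ℕ => ⋀[R]^i (Fin m → R)) (B r s) 0 :
      ExteriorAlgebra R (Fin m → R)) = 0 := by
    set π : ExteriorAlgebra R (Fin m → R) →+* ExteriorAlgebra R (Fin m → R) :=
      GradedRing.projZeroRingHom (fun i : ℕ => ⋀[R]^i (Fin m → R)) with hπ
    have hπd : ∀ x : ExteriorAlgebra R (Fin m → R),
        π x = (DirectSum.decompose (fun i : ℕ => ⋀[R]^i (Fin m → R)) x 0 :
          ExteriorAlgebra R (Fin m → R)) := fun x => rfl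
    have hπalg : ∀ c : R, π (algebraMap R _ c) = algebraMap R _ c := fun c =>
      (hπd _).trans (DirectSum.decompose_of_mem_same _ (halg0 c))
    have hcomp : π.mapMatrix.comp (algebraMap R (Matrix (Fin n) (Fin n)
        (ExteriorAlgebra R (Fin m → R)))) =
        algebraMap R (Matrix (Fin n) (Fin n) (ExteriorAlgebra R (Fin m → R))) := by
      refine RingHom.ext fun c => ?_
      ext i j
      simp only [RingHom.comp_apply, RingHom.mapMatrix_apply, Matrix.map_apply,
        Matrix.algebraMap_matrix_apply]
      split
      · exact hπalg c
      · exact map_zero π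
    have hPA : A.map π = Matrix.diagonal (fun j => algebraMap R _ (lam j)) := by
      ext i j
      rw [Matrix.map_apply, hπd, hA₀ i j]
      by_cases h : i = j
      · subst h; simp [Matrix.diagonal_apply_eq]
      · simp [Matrix.diagonal_apply_ne _ h, Matrix.diagonal_apply_ne lam h]
    have hmap : B.map π = 0 := by
      rw [hB, Polynomial.aeval_def, ← RingHom.mapMatrix_apply, Polynomial.hom_eval₂,
        hcomp, RingHom.mapMatrix_apply, hPA, ← Polynomial.aeval_def]
      rw [show (Matrix.diagonal (fun j => algebraMap R (ExteriorAlgebra R (Fin m → R)) (lam j))) =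
        Matrix.diagonalAlgHom (R := R)
          (fun j => algebraMap R (ExteriorAlgebra R (Fin m → R)) (lam j)) from rfl,
        Polynomial.aeval_algHom_apply]
      have hzero : (Polynomial.aeval
          (fun j : Fin n => algebraMap R (ExteriorAlgebra R (Fin m → R)) (lam j)) f) = 0 := by
        funext j
        have heval : (Polynomial.aeval
            (fun j : Fin n => algebraMap R (ExteriorAlgebra R (Fin m → R)) (lam j)) f) j =
            Polynomial.aeval (algebraMap R (ExteriorAlgebra R (Fin m → R)) (lam j)) f :=
          (Polynomial.aeval_algHom_apply
            (Pi.evalAlgHom R (fun _ => ExteriorAlgebra R (Fin m → R)) j) _ f).symm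
        rw [heval, Polynomial.aeval_algebraMap_apply_eq_algebraMap_eval, hf,
          Polynomial.eval_prod, Finset.prod_eq_zero (Finset.mem_univ j) (by simp)]
        simp
      rw [hzero, map_zero]
    intro r s
    have h := congrFun (congrFun hmap r) s
    rw [Matrix.map_apply, hπd] at h
    simpa using h
  -- A and B commute
  have hAB : A * B = B * A := by
    rw [hB]
    have h1 : A * Polynomial.aeval A f = Polynomial.aeval A (X * f) := by
      rw [map_mul, Polynomial.aeval_X]
    have h2 : Polynomial.aeval A f * A = Polynomial.aeval A (f * X) := by
      rw [map_mul, Polynomial.aeval_X]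
    rw [h1, h2, mul_comm]
  -- entrywise decompose of sums
  have Dsum : ∀ (g : Fin n → ExteriorAlgebra R (Fin m → R)) (k : ℕ),
      (DirectSum.decompose (fun i : ℕ => ⋀[R]^i (Fin m → R)) (∑ t, g t) k :
        ExteriorAlgebra R (Fin m → R)) =
      ∑ t, (DirectSum.decompose (fun i : ℕ => ⋀[R]^i (Fin m → R)) (g t) k :
        ExteriorAlgebra R (Fin m → R)) := by
    intro g k
    rw [DirectSum.decompose_sum, DFinsupp.finset_sum_apply, AddSubmonoidClass.coe_finset_sum]
  -- degree-1 relation : B₁ is diagonal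
  have key1 : ∀ r s, algebraMap R (ExteriorAlgebra R (Fin m → R)) (lam r) * B₁ r s =
      B₁ r s * algebraMap R (ExteriorAlgebra R (Fin m → R)) (lam s) := by
    intro r s
    have hL : (DirectSum.decompose (fun i : ℕ => ⋀[R]^i (Fin m → R)) ((A * B) r s) 1 :
        ExteriorAlgebra R (Fin m → R)) = algebraMap R _ (lam r) * B₁ r s := by
      rw [Matrix.mul_apply, Dsum]
      have hterm : ∀ t, (DirectSum.decompose (fun i : ℕ => ⋀[R]^i (Fin m → R))
          (A r t * B t s) 1 : ExteriorAlgebra R (Fin m → R)) =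
          algebraMap R _ (Matrix.diagonal lam r t) * B₁ t s := by
        intro t
        rw [gchl_decompose_mul]
        simp only [Finset.sum_range_succ, Finset.sum_range_zero, zero_add]
        norm_num
        rw [hA₀, hA₁, hB0, mul_zero, add_zero, ← hB₁]
      simp_rw [hterm]
      rw [Finset.sum_eq_single r ?_ (by simp)]
      · rw [Matrix.diagonal_apply_eq]
      · intro t _ ht
        rw [Matrix.diagonal_apply_ne' _ ht, map_zero, zero_mul]
    have hR : (DirectSum.decompose (fun i : ℕ => ⋀[R]^i (Fin m → R)) ((B * A) r s) 1 :
        ExteriorAlgebra R (Fin m → R)) = B₁ r s * algebraMap R _ (lam s) := by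
      rw [Matrix.mul_apply, Dsum]
      have hterm : ∀ t, (DirectSum.decompose (fun i : ℕ => ⋀[R]^i (Fin m → R))
          (B r t * A t s) 1 : ExteriorAlgebra R (Fin m → R)) =
          B₁ r t * algebraMap R _ (Matrix.diagonal lam t s) := by
        intro t
        rw [gchl_decompose_mul]
        simp only [Finset.sum_range_succ, Finset.sum_range_zero, zero_add]
        norm_num
        rw [hA₀, hA₁, hB0, zero_mul, zero_add, ← hB₁]
      simp_rw [hterm]
      rw [Finset.sum_eq_single s ?_ (by simp)]
      · rw [Matrix.diagonal_apply_eq]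
      · intro t _ ht
        rw [Matrix.diagonal_apply_ne _ ht, map_zero, mul_zero]
    rw [← hL, ← hR, hAB]
  have hB₁diag : ∀ r s, r ≠ s → B₁ r s = 0 := by
    intro r s hrs
    have h := key1 r s
    rw [← Algebra.commutes (lam s) (B₁ r s)] at h
    have h2 : (lam r - lam s) • B₁ r s = 0 := by
      rw [sub_smul, Algebra.smul_def, Algebra.smul_def, h, sub_self]
    have hne : lam r - lam s ≠ 0 := sub_ne_zero_of_ne (fun hc => hrs (hlam hc))
    have h3 := congrArg (fun z => (lam r - lam s)⁻¹ • z) h2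
    simpa [smul_smul, inv_mul_cancel₀ hne] using h3
  -- degree-2 relation
  have key2 : ∀ r s, r ≠ s →
      (lam r - lam s) • B₂ r s = B₁ r r * v r s - v r s * B₁ s s := by
    intro r s hrs
    have hL : (DirectSum.decompose (fun i : ℕ => ⋀[R]^i (Fin m → R)) ((A * B) r s) 2 :
        ExteriorAlgebra R (Fin m → R)) = algebraMap R _ (lam r) * B₂ r s + v r s * B₁ s s := by
      rw [Matrix.mul_apply, Dsum]
      have hterm : ∀ t, (DirectSum.decompose (fun i : ℕ => ⋀[R]^i (Fin m → R))
          (A r t * B t s) 2 : ExteriorAlgebra R (Fin m → R)) =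
          algebraMap R _ (Matrix.diagonal lam r t) * B₂ t s + v r t * B₁ t s := by
        intro t
        rw [gchl_decompose_mul]
        simp only [Finset.sum_range_succ, Finset.sum_range_zero, zero_add]
        norm_num
        rw [hA₀, hA₁, hB0, mul_zero, add_zero, ← hB₁, ← hB₂]
      simp_rw [hterm]
      rw [Finset.sum_add_distrib]
      congr 1
      · rw [Finset.sum_eq_single r ?_ (by simp)]
        · rw [Matrix.diagonal_apply_eq]
        · intro t _ ht
          rw [Matrix.diagonal_apply_ne' _ ht, map_zero, zero_mul]
      · rw [Finset.sum_eq_single s ?_ (by simp)]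
        intro t _ ht
        rw [hB₁diag t s ht, mul_zero]
    have hR : (DirectSum.decompose (fun i : ℕ => ⋀[R]^i (Fin m → R)) ((B * A) r s) 2 :
        ExteriorAlgebra R (Fin m → R)) = B₂ r s * algebraMap R _ (lam s) + B₁ r r * v r s := by
      rw [Matrix.mul_apply, Dsum]
      have hterm : ∀ t, (DirectSum.decompose (fun i : ℕ => ⋀[R]^i (Fin m → R))
          (B r t * A t s) 2 : ExteriorAlgebra R (Fin m → R)) =
          B₂ r t * algebraMap R _ (Matrix.diagonal lam t s) + B₁ r t * v t s := by
        intro t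
        rw [gchl_decompose_mul]
        simp only [Finset.sum_range_succ, Finset.sum_range_zero, zero_add]
        norm_num
        rw [hA₀, hA₁, hB0, zero_mul, zero_add, ← hB₁, ← hB₂, add_comm]
      simp_rw [hterm]
      rw [Finset.sum_add_distrib]
      congr 1
      · rw [Finset.sum_eq_single s ?_ (by simp)]
        · rw [Matrix.diagonal_apply_eq]
        · intro t _ ht
          rw [Matrix.diagonal_apply_ne _ ht, map_zero, mul_zero]
      · rw [Finset.sum_eq_single r ?_ (by simp)]
        intro t _ ht
        rw [hB₁diag r t (fun hc => ht hc.symm), zero_mul]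
    have h : algebraMap R (ExteriorAlgebra R (Fin m → R)) (lam r) * B₂ r s + v r s * B₁ s s =
        B₂ r s * algebraMap R _ (lam s) + B₁ r r * v r s := by
      rw [← hL, ← hR, hAB]
    rw [← Algebra.commutes (lam s) (B₂ r s)] at h
    rw [sub_smul, Algebra.smul_def, Algebra.smul_def, sub_eq_sub_iff_add_eq_add]
    rw [h]
    rw [add_comm]
  -- Now the two conclusions
  constructor
  · ext r s
    rw [hB₂p, Matrix.mul_diagonal, Matrix.diagonal_mul]
    by_cases hrs : r = s
    · subst hrs
      exact gchl_comm2 (hmem1 r r) (hmem2 r r)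
    · rw [hB₁diag r s hrs, zero_mul, mul_zero]
  · ext r s
    rw [Matrix.neg_apply, Matrix.mul_apply, Matrix.mul_apply]
    have hB₂m_apply : ∀ i j, B₂m i j = if i = j then 0 else B₂ i j := by
      intro i j
      rw [hB₂m, Matrix.sub_apply, hB₂p]
      by_cases h : i = j
      · subst h; simp [Matrix.diagonal_apply_eq]
      · simp [Matrix.diagonal_apply_ne _ h, h]
    rw [Finset.sum_eq_single r (fun t _ ht => by
      rw [hB₁diag r t (fun hc => ht hc.symm), zero_mul]) (by simp)]
    rw [Finset.sum_eq_single s (fun t _ ht => by rw [hB₁diag t s ht, mul_zero]) (by simp)]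
    by_cases hrs : r = s
    · subst hrs
      rw [hB₂m_apply r r, if_pos rfl, mul_zero, zero_mul, neg_zero]
    · rw [hB₂m_apply r s, if_neg hrs]
      have hcomm : B₂ r s * B₁ s s = B₁ s s * B₂ r s :=
        (gchl_comm2 (hmem1 s s) (hmem2 r s)).symm
      rw [hcomm]
      have hz : (B₁ r r + B₁ s s) * B₂ r s = 0 := by
        have hne : lam r - lam s ≠ 0 := sub_ne_zero_of_ne (fun hc => hrs (hlam hc))
        have hb2 : B₂ r s = (lam r - lam s)⁻¹ • (B₁ r r * v r s - v r s * B₁ s s) := by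
          rw [← key2 r s hrs, smul_smul, inv_mul_cancel₀ hne, one_smul]
        rw [hb2, mul_smul_comm, gchl_key (hmem1 r r) (hmem1 s s) (hv r s), smul_zero]
      rw [add_mul] at hz
      exact eq_neg_of_add_eq_zero_left hz
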